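/- Let w : ℕ → (0,∞) with w(0) = 1 satisfy w(k) = k + v(k) where v(k) = o(k) as k → ∞ and ∑_{k≥1} v(k)/k² converges. Then for every r > 0 there exist constants 0 < D₁ ≤ D₂ < ∞ such that for all k ≥ 1, D₁ k^r ≤ ∏_{j=0}^{k−1} (r + w(j))/w(j) ≤ D₂ k^r. -/

import Mathlib

set_option maxHeartbeats 1000000


open Filter Asymptotics Topology

lemma statement12.logAux {x : ℝ} (hx : 0 ≤ x) : |Real.log (1 + x) - x| ≤ x ^ 2 := by
  have h1x : (0:ℝ) < 1 + x := by linarith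
  have h1 : Real.log (1 + x) ≤ x := by
    have := Real.log_le_sub_one_of_pos h1x; linarith
  have h2 : Real.log ((1 + x)⁻¹) ≤ (1 + x)⁻¹ - 1 :=
    Real.log_le_sub_one_of_pos (by positivity)
  rw [Real.log_inv] at h2
  have h3 : x / (1 + x) ≤ Real.log (1 + x) := by
    have : (1 + x)⁻¹ - 1 = -(x / (1 + x)) := by field_simp; ring
    rw [this] at h2; linarith
  rw [abs_le]
  constructor
  · have : x - x ^ 2 ≤ x / (1 + x) := by
      rw [le_div_iff₀ h1x]; nlinarith
    linarith
  · nlinarith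

/-- If `w k = k + v k` with `v k = o(k)` and `∑ v k / k²` convergent, then for
every `r > 0` there are `0 < D₁ ≤ D₂ < ∞` with `D₁ k^r ≤ ∏_{j=0}^{k-1} (r + w j)/w j ≤ D₂ k^r`
for all `k ≥ 1`. -/
theorem statement12
    (w v : ℕ → ℝ) (hw : ∀ k, 0 < w k) (hw0 : w 0 = 1)
    (hwv : ∀ k, w k = (k : ℝ) + v k)
    (hv : v =o[atTop] fun k : ℕ => (k : ℝ))
    (hvsum : Summable (fun k : ℕ => v k / (k : ℝ) ^ 2))
    (r : ℝ) (hr : 0 < r) :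
    ∃ D₁ D₂ : ℝ, 0 < D₁ ∧ D₁ ≤ D₂ ∧ ∀ k : ℕ, 1 ≤ k →
      D₁ * (k : ℝ) ^ r ≤ (∏ j ∈ Finset.range k, (r + w j) / w j) ∧
      (∏ j ∈ Finset.range k, (r + w j) / w j) ≤ D₂ * (k : ℝ) ^ r := by
  set d : ℕ → ℝ := fun j => Real.log (1 + r / w j) - r * Real.log (1 + 1 / (j:ℝ)) with hd
  -- summable comparison function
  have hsumg : Summable (fun j : ℕ =>
      (4*r^2 + 3*r) * (|v j| / (j:ℝ)^2 + 1 / (j:ℝ)^2)) := by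
    refine Summable.mul_left _ (Summable.add ?_ ?_)
    · exact hvsum.abs.congr (fun j => by
        rw [abs_div, abs_of_nonneg (by positivity : (0:ℝ) ≤ (j:ℝ)^2)])
    · exact_mod_cast Real.summable_one_div_nat_pow.mpr (by norm_num)
  -- summability of d
  have hdsum : Summable d := by
    apply Summable.of_norm_bounded_eventually_nat hsumg
    have hev : ∀ᶠ j : ℕ in atTop, ‖v j‖ ≤ (1/2) * ‖(j:ℝ)‖ := hv.def (by norm_num)
    filter_upwards [hev, eventually_ge_atTop 1] with j hj hj1
    have hjr : (1:ℝ) ≤ (j:ℝ) := by exact_mod_cast hj1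
    have hjrpos : (0:ℝ) < (j:ℝ) := by linarith
    have hvj : |v j| ≤ (j:ℝ)/2 := by
      rw [Real.norm_eq_abs, Real.norm_eq_abs, abs_of_pos hjrpos] at hj; linarith
    have hw2 : (j:ℝ)/2 ≤ w j := by
      rw [hwv j]
      have := neg_abs_le (v j); linarith
    have hwpos := hw j
    set a : ℝ := r / w j with ha
    set b : ℝ := 1 / (j:ℝ) with hb
    have ha0 : 0 ≤ a := by positivity
    have hb0 : 0 ≤ b := by positivity
    have hA : |Real.log (1 + a) - a| ≤ a ^ 2 := statement12.logAux ha0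
    have hB : |Real.log (1 + b) - b| ≤ b ^ 2 := statement12.logAux hb0
    have ha2 : a ^ 2 ≤ 4*r^2 / (j:ℝ)^2 := by
      have haux : a ≤ 2*r/(j:ℝ) := by
        rw [ha, div_le_div_iff₀ hwpos hjrpos]; nlinarith
      calc a ^ 2 ≤ (2*r/(j:ℝ))^2 := by nlinarith
        _ = 4*r^2/(j:ℝ)^2 := by ring
    have hb2 : b ^ 2 = 1 / (j:ℝ)^2 := by rw [hb, div_pow, one_pow]
    have hkey : a - r * b = -(r * v j) / (w j * (j:ℝ)) := by
      have hvj' : v j = w j - (j:ℝ) := by rw [hwv j]; ring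
      rw [ha, hb, hvj']
      field_simp
      ring
    have hkey2 : |a - r * b| ≤ 2*r*|v j| / (j:ℝ)^2 := by
      rw [hkey, abs_div, abs_neg, abs_mul, abs_of_pos hr,
        abs_of_pos (mul_pos hwpos hjrpos), div_le_div_iff₀ (by positivity) (by positivity)]
      nlinarith [mul_nonneg (mul_nonneg hr.le (abs_nonneg (v j)))
        (mul_nonneg hjrpos.le (by linarith : (0:ℝ) ≤ 2 * w j - (j:ℝ)))]
    have htri : |d j| ≤ |Real.log (1 + a) - a| + r * |Real.log (1 + b) - b| + |a - r*b| := by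
      have e1 : d j = (Real.log (1 + a) - a) - r * (Real.log (1 + b) - b) + (a - r*b) := by
        rw [hd]; ring
      rw [e1]
      calc |(Real.log (1 + a) - a) - r * (Real.log (1 + b) - b) + (a - r*b)|
          ≤ |(Real.log (1 + a) - a) - r * (Real.log (1 + b) - b)| + |a - r*b| := abs_add_le _ _
        _ ≤ |Real.log (1 + a) - a| + |r * (Real.log (1 + b) - b)| + |a - r*b| := by
            have := abs_sub (Real.log (1 + a) - a) (r * (Real.log (1 + b) - b))
            linarith
        _ = |Real.log (1 + a) - a| + r * |Real.log (1 + b) - b| + |a - r*b| := by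
            rw [abs_mul, abs_of_pos hr]
    rw [Real.norm_eq_abs]
    have hfin : |d j| ≤ 4*r^2/(j:ℝ)^2 + r * (1/(j:ℝ)^2) + 2*r*|v j|/(j:ℝ)^2 := by
      have := mul_le_mul_of_nonneg_left hB hr.le
      rw [hb2] at this
      linarith
    have e : (4*r^2+3*r)*(|v j|/(j:ℝ)^2 + 1/(j:ℝ)^2)
        = 4*r^2/(j:ℝ)^2 + r*(1/(j:ℝ)^2) + 2*r*|v j|/(j:ℝ)^2
          + ((4*r^2+r)*(|v j|/(j:ℝ)^2) + 2*r*(1/(j:ℝ)^2)) := by ring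
    have pos1 : (0:ℝ) ≤ (4*r^2+r)*(|v j|/(j:ℝ)^2) := by positivity
    have pos2 : (0:ℝ) ≤ 2*r*(1/(j:ℝ)^2) := by positivity
    linarith
  -- partial sums converge, hence bounded
  have hH : Tendsto (fun n => |∑ j ∈ Finset.range n, d j|) atTop (𝓝 |∑' j, d j|) :=
    (hdsum.hasSum.tendsto_sum_nat).abs
  obtain ⟨M, hM⟩ := hH.bddAbove_range
  have hMb : ∀ n : ℕ, |∑ j ∈ Finset.range n, d j| ≤ M := by
    intro n; exact hM ⟨n, rfl⟩
  have hM0 : 0 ≤ M := le_trans (abs_nonneg _) (hMb 0)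
  refine ⟨Real.exp (-M), Real.exp M, Real.exp_pos _, Real.exp_le_exp.mpr (by linarith), ?_⟩
  intro k hk
  have hkpos : (0:ℝ) < (k:ℝ) := by exact_mod_cast hk
  -- telescoping: sum of log(1+1/j) over range k is log k
  have tele : ∀ j : ℕ, Real.log (1 + 1/(j:ℝ)) = Real.log ((j:ℝ)+1) - Real.log (j:ℝ) := by
    intro j
    cases j with
    | zero => simp
    | succ n =>
      have hn : (0:ℝ) < (n:ℝ) + 1 := by positivity
      have : 1 + 1/((n+1:ℕ):ℝ) = (((n+1:ℕ):ℝ)+1) / ((n+1:ℕ):ℝ) := by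
        push_cast; field_simp
      rw [this, Real.log_div (by push_cast; positivity) (by push_cast; positivity)]
  have hsumtele : ∑ j ∈ Finset.range k, Real.log (1 + 1/(j:ℝ)) = Real.log (k:ℝ) := by
    have := Finset.sum_range_sub (fun n : ℕ => Real.log (n:ℝ)) k
    calc ∑ j ∈ Finset.range k, Real.log (1 + 1/(j:ℝ))
        = ∑ j ∈ Finset.range k, (Real.log ((j+1:ℕ):ℝ) - Real.log (j:ℝ)) := by
          refine Finset.sum_congr rfl fun j _ => ?_
          rw [tele j]; push_cast; ring_nf
      _ = Real.log (k:ℝ) - Real.log ((0:ℕ):ℝ) := this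
      _ = Real.log (k:ℝ) := by simp
  -- product equals exp(partial sum of d) * k^r
  have hprod : (∏ j ∈ Finset.range k, (r + w j) / w j)
      = Real.exp (∑ j ∈ Finset.range k, d j) * (k:ℝ) ^ r := by
    have h1 : (∏ j ∈ Finset.range k, (r + w j) / w j)
        = Real.exp (∑ j ∈ Finset.range k, Real.log (1 + r / w j)) := by
      rw [Real.exp_sum]
      refine Finset.prod_congr rfl fun j _ => ?_
      have hwj := hw j
      have : 1 + r / w j = (r + w j) / w j := by field_simp; ring
      rw [this, Real.exp_log (by positivity)]
    have h2 : ∑ j ∈ Finset.range k, d j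
        = (∑ j ∈ Finset.range k, Real.log (1 + r / w j)) - r * Real.log (k:ℝ) := by
      rw [hd, Finset.sum_sub_distrib, ← Finset.mul_sum, hsumtele]
    rw [h1, h2, Real.rpow_def_of_pos hkpos, ← Real.exp_add]
    congr 1
    ring
  have hle := hMb k
  rw [abs_le] at hle
  have hkr : (0:ℝ) < (k:ℝ) ^ r := Real.rpow_pos_of_pos hkpos r
  constructor
  · rw [hprod]
    exact mul_le_mul_of_nonneg_right (Real.exp_le_exp.mpr hle.1) hkr.le
  · rw [hprod]
    exact mul_le_mul_of_nonneg_right (Real.exp_le_exp.mpr hle.2) hkr.le
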